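/- Let M ∈ ℂ with M ≠ 0 and y ∈ ℂ, set P = [[M, 1], [0, M⁻¹]], Q = [[M, 0], [2−y, M⁻¹]], and x = M + M⁻¹. Then for every integer m, the trace of (QP⁻¹)^m (Q⁻¹P)^m equals 2 + (y−2)(y+2−x²)·S_{m−1}(y)². -/

import Mathlib

open Polynomial

/-- Integer-indexed Chebyshev-like polynomials: `S 0 = 1`, `S 1 = X`,
and `S (l+1) = X * S l - S (l-1)` for all `l : ℤ`
(equivalently `S l = U_l (v/2)` for the Chebyshev polynomials `U` of the second kind). -/
@[semireducible] noncomputable def chebS (R : Type*) [CommRing R] : ℤ → R[X]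
  | 0 => 1
  | 1 => X
  | (n : ℕ) + 2 => X * chebS R (n + 1) - chebS R n
  | -((n : ℕ) + 1) => X * chebS R (-n) - chebS R (-n + 1)
  termination_by n => Int.natAbs n + Int.natAbs (n - 1)

lemma chebS_zero (R : Type*) [CommRing R] : chebS R 0 = 1 := by rw [chebS.eq_def]
lemma chebS_one (R : Type*) [CommRing R] : chebS R 1 = X := by rw [chebS.eq_def]
lemma chebS_two_add (R : Type*) [CommRing R] (n : ℕ) :
    chebS R ((n:ℤ) + 2) = X * chebS R (n + 1) - chebS R n := by
  rw [chebS.eq_def]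
  rw [show ((n:ℤ) + 2) = Int.ofNat n.succ.succ by
    simp only [Int.ofNat_eq_natCast]; push_cast; ring]
lemma chebS_negSucc (R : Type*) [CommRing R] (n : ℕ) :
    chebS R (-((n:ℤ) + 1)) = X * chebS R (-n) - chebS R (-n + 1) := by
  rw [chebS.eq_def]
  rw [show (-((n:ℤ) + 1)) = Int.negSucc n from rfl]

lemma chebS_neg_one (R : Type*) [CommRing R] : chebS R (-1) = 0 := by
  have := chebS_negSucc R 0
  simpa [chebS_zero, chebS_one] using this

lemma chebS_neg_two (R : Type*) [CommRing R] : chebS R (-2) = -1 := by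
  have := chebS_negSucc R 1
  norm_num at this
  rw [this, chebS_zero, chebS_neg_one]
  ring

lemma chebS_rec (R : Type*) [CommRing R] (k : ℤ) :
    chebS R (k + 1) = X * chebS R k - chebS R (k - 1) := by
  rcases k with n | n
  · cases n with
    | zero => simp [chebS_zero, chebS_one, chebS_neg_one]
    | succ n =>
      have := chebS_two_add R n
      rw [show ((Int.ofNat (n+1)) + 1) = (n:ℤ) + 2 by
          simp only [Int.ofNat_eq_natCast]; push_cast; ring, this,
        show ((Int.ofNat (n+1)) - 1) = (n:ℤ) by
          simp only [Int.ofNat_eq_natCast]; push_cast; ring,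
        show (Int.ofNat (n+1) : ℤ) = (n:ℤ) + 1 by
          simp only [Int.ofNat_eq_natCast]; push_cast; ring]
  · -- k = -(n+1)
    have h := chebS_negSucc R (n+1)
    rw [show ((Int.negSucc n) + 1) = -(n:ℤ) by rw [Int.negSucc_eq]; push_cast; ring,
      show ((Int.negSucc n) - 1) = -(((n+1:ℕ):ℤ)+1) by rw [Int.negSucc_eq]; push_cast; ring,
      show (Int.negSucc n) = -((n:ℤ)+1) from rfl, h]
    push_cast
    rw [show (-((n:ℤ)+1)+1) = -(n:ℤ) by ring]
    ring

lemma cheb_eval_rec (y : ℂ) (k : ℤ) :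
    (chebS ℂ (k + 1)).eval y = y * (chebS ℂ k).eval y - (chebS ℂ (k - 1)).eval y := by
  rw [chebS_rec]; simp

lemma cheb_norm (y : ℂ) (k : ℤ) :
    (chebS ℂ k).eval y ^ 2 - y * (chebS ℂ k).eval y * (chebS ℂ (k - 1)).eval y
      + (chebS ℂ (k - 1)).eval y ^ 2 = 1 := by
  induction k using Int.induction_on with
  | zero => norm_num [chebS_zero, chebS_neg_one]
  | succ i ih =>
    have h := cheb_eval_rec y i
    rw [show ((i:ℤ) + 1 - 1) = (i:ℤ) by ring, h]
    linear_combination ih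
  | pred i ih =>
    have h := cheb_eval_rec y (-(i:ℤ) - 1)
    rw [show (-(i:ℤ) - 1 + 1) = -(i:ℤ) by ring] at h
    have hb : (chebS ℂ (-(i:ℤ) - 1 - 1)).eval y
        = y * (chebS ℂ (-(i:ℤ) - 1)).eval y - (chebS ℂ (-(i:ℤ))).eval y := by
      linear_combination h
    rw [hb]
    linear_combination ih

lemma pow_formula (y : ℂ) (A : Matrix (Fin 2) (Fin 2) ℂ) (hdet : IsUnit A.det)
    (hCH : A * A = y • A - 1) (m : ℤ) :
    A ^ m = ((chebS ℂ (m - 1)).eval y) • A - ((chebS ℂ (m - 2)).eval y) • (1 : Matrix (Fin 2) (Fin 2) ℂ) := by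
  have hinv : A⁻¹ = y • (1 : Matrix (Fin 2) (Fin 2) ℂ) - A := by
    apply Matrix.inv_eq_right_inv
    rw [mul_sub, Matrix.mul_smul, mul_one, hCH]
    abel
  induction m using Int.induction_on with
  | zero =>
    norm_num [chebS_neg_one, chebS_neg_two, show ((0:ℤ) - 2) = -2 by ring]
  | succ i ih =>
    rw [Matrix.zpow_add_one hdet, ih, sub_mul, Matrix.smul_mul, Matrix.smul_mul, one_mul, hCH,
      show ((i:ℤ) + 1 - 1) = ((i:ℤ) - 1) + 1 by ring,
      show ((i:ℤ) + 1 - 2) = (i:ℤ) - 1 by ring,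
      cheb_eval_rec, show ((i:ℤ) - 1 - 1) = (i:ℤ) - 2 by ring]
    module
  | pred i ih =>
    have key : A ^ (-(i:ℤ) - 1) = A ^ (-(i:ℤ)) * A⁻¹ := Matrix.zpow_sub_one hdet (-(i:ℤ))
    rw [key, ih, hinv,
      show (-(i:ℤ) - 1 - 1) = -(i:ℤ) - 2 by ring,
      show (-(i:ℤ) - 1 - 2) = -(i:ℤ) - 3 by ring]
    have h := cheb_eval_rec y (-(i:ℤ) - 2)
    rw [show (-(i:ℤ) - 2 + 1) = -(i:ℤ) - 1 by ring,
      show (-(i:ℤ) - 2 - 1) = -(i:ℤ) - 3 by ring] at h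
    have h3 : (chebS ℂ (-(i:ℤ) - 3)).eval y
        = y * (chebS ℂ (-(i:ℤ) - 2)).eval y - (chebS ℂ (-(i:ℤ) - 1)).eval y := by
      linear_combination h
    rw [h3, sub_mul, Matrix.smul_mul, Matrix.smul_mul, mul_sub, mul_sub,
      Matrix.mul_smul, Matrix.mul_smul, mul_one, one_mul, hCH]
    rw [one_mul]
    module



/-- For `P = [[M,1],[0,M⁻¹]]`, `Q = [[M,0],[2-y,M⁻¹]]`, `x = M + M⁻¹` and every integer `m`,
`tr ((QP⁻¹)^m (Q⁻¹P)^m) = 2 + (y-2)(y+2-x²)·S_{m-1}(y)²`. -/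
theorem even_word_trace (M y : ℂ) (hM : M ≠ 0) (m : ℤ) :
    Matrix.trace ((!![M, 0; 2 - y, M⁻¹] * (!![M, 1; 0, M⁻¹])⁻¹) ^ m
        * ((!![M, 0; 2 - y, M⁻¹])⁻¹ * !![M, 1; 0, M⁻¹]) ^ m)
      = 2 + (y - 2) * (y + 2 - (M + M⁻¹)^2) * ((chebS ℂ (m - 1)).eval y) ^ 2 := by
  have hPinv : (!![M, 1; 0, M⁻¹])⁻¹ = !![M⁻¹, -1; 0, M] := by
    apply Matrix.inv_eq_right_inv
    ext i j
    fin_cases i <;> fin_cases j <;>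
      (simp [Matrix.mul_apply, Fin.sum_univ_two, Matrix.smul_apply]; try ring_nf; try field_simp; try ring)
  have hQinv : (!![M, 0; 2 - y, M⁻¹])⁻¹ = !![M⁻¹, 0; y - 2, M] := by
    apply Matrix.inv_eq_right_inv
    ext i j
    fin_cases i <;> fin_cases j <;>
      (simp [Matrix.mul_apply, Fin.sum_univ_two, Matrix.smul_apply]; try ring_nf; try field_simp; try ring)
  have hA : !![M, 0; 2 - y, M⁻¹] * !![M⁻¹, -1; 0, M] = !![1, -M; (2 - y) * M⁻¹, y - 1] := by
    ext i j
    fin_cases i <;> fin_cases j <;>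
      (simp [Matrix.mul_apply, Fin.sum_univ_two, Matrix.smul_apply]; try ring_nf; try field_simp; try ring)
  have hB : !![M⁻¹, 0; y - 2, M] * !![M, 1; 0, M⁻¹] = !![1, M⁻¹; (y - 2) * M, y - 1] := by
    ext i j
    fin_cases i <;> fin_cases j <;>
      (simp [Matrix.mul_apply, Fin.sum_univ_two, Matrix.smul_apply]; try ring_nf; try field_simp; try ring)
  have hdetA : IsUnit (!![(1:ℂ), -M; (2 - y) * M⁻¹, y - 1]).det := by
    rw [Matrix.det_fin_two_of]
    have : (1:ℂ) * (y - 1) - -M * ((2 - y) * M⁻¹) = 1 := by field_simp; ring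
    rw [this]; exact isUnit_one
  have hdetB : IsUnit (!![(1:ℂ), M⁻¹; (y - 2) * M, y - 1]).det := by
    rw [Matrix.det_fin_two_of]
    have : (1:ℂ) * (y - 1) - M⁻¹ * ((y - 2) * M) = 1 := by field_simp; ring
    rw [this]; exact isUnit_one
  have hCHA : !![(1:ℂ), -M; (2 - y) * M⁻¹, y - 1] * !![(1:ℂ), -M; (2 - y) * M⁻¹, y - 1]
      = y • !![(1:ℂ), -M; (2 - y) * M⁻¹, y - 1] - 1 := by
    ext i j
    fin_cases i <;> fin_cases j <;>
      (simp [Matrix.mul_apply, Fin.sum_univ_two, Matrix.smul_apply]; try ring_nf; try field_simp; try ring)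
  have hCHB : !![(1:ℂ), M⁻¹; (y - 2) * M, y - 1] * !![(1:ℂ), M⁻¹; (y - 2) * M, y - 1]
      = y • !![(1:ℂ), M⁻¹; (y - 2) * M, y - 1] - 1 := by
    ext i j
    fin_cases i <;> fin_cases j <;>
      (simp [Matrix.mul_apply, Fin.sum_univ_two, Matrix.smul_apply]; try ring_nf; try field_simp; try ring)
  rw [hPinv, hQinv, hA, hB, pow_formula y _ hdetA hCHA m, pow_formula y _ hdetB hCHB m]
  set s : ℂ := (chebS ℂ (m - 1)).eval y with hs
  set t : ℂ := (chebS ℂ (m - 2)).eval y with ht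
  have hnorm : s ^ 2 - y * s * t + t ^ 2 = 1 := by
    have := cheb_norm y (m - 1)
    rwa [show (m - 1 - 1) = m - 2 by ring] at this
  simp only [sub_mul, mul_sub, Matrix.smul_mul, Matrix.mul_smul, Matrix.one_mul,
    Matrix.mul_one, smul_smul, Matrix.mul_fin_two, Matrix.trace_sub, Matrix.trace_smul,
    Matrix.trace_one, Matrix.trace_fin_two_of, smul_eq_mul, Fintype.card_fin]
  field_simp
  linear_combination (2 * M ^ 2) * hnorm
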